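/- arXiv:0707.1512 — 2 statements merged into one kernel-verified Lean document; each statement's English description precedes it below -/
import Mathlib

section
/- The fixed point set of γ(x) = (-x₁,x₂,-x₃,x₄,-x₅+1/2,x₆,-x₇+1/2) on 𝕋⁷ is the union of the 16 disjoint 3-tori {x : x₁,x₃ ∈ {0,1/2}, x₅,x₇ ∈ {1/4, 3/4}}, and the composite βγ (where β(x) = (x₁,-x₂,-x₃,x₄,x₅,-x₆+1/2,-x₇)) acts on 𝕋⁷ without fixed points. -/
/-- The circle `ℝ/ℤ`. -/
abbrev Circ := AddCircle (1 : ℝ)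

/-- The 7-torus `𝕋⁷ = ℝ⁷/ℤ⁷`. -/
abbrev T7 := Fin 7 → Circ

noncomputable def half : Circ := ((1/2 : ℝ) : Circ)

/-- The involution `α(x) = (x₁,x₂,x₃,-x₄,-x₅,-x₆,-x₇)`. -/
noncomputable def tα (x : T7) : T7 := ![x 0, x 1, x 2, -x 3, -x 4, -x 5, -x 6]

/-- The involution `β(x) = (x₁,-x₂,-x₃,x₄,x₅,-x₆+1/2,-x₇)`. -/
noncomputable def tβ (x : T7) : T7 := ![x 0, -x 1, -x 2, x 3, x 4, -x 5 + half, -x 6]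

/-- The involution `γ(x) = (-x₁,x₂,-x₃,x₄,-x₅+1/2,x₆,-x₇+1/2)`. -/
noncomputable def tγ (x : T7) : T7 := ![-x 0, x 1, -x 2, x 3, -x 4 + half, x 5, -x 6 + half]

noncomputable def quarter : Circ := ((1/4 : ℝ) : Circ)
noncomputable def threeQuarter : Circ := ((3/4 : ℝ) : Circ)

lemma coe_int_zero (k : ℤ) : ((k : ℝ) : Circ) = 0 :=
  (AddCircle.coe_eq_zero_iff (1:ℝ)).2 ⟨k, by simp⟩

lemma l1 (x : Circ) : -x = x ↔ x = 0 ∨ x = half := by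
  constructor
  · intro h
    induction x using QuotientAddGroup.induction_on with | H r =>
    have h2 : ((r + r : ℝ) : Circ) = 0 := by
      have := neg_eq_iff_add_eq_zero.1 h
      rwa [← AddCircle.coe_add] at this
    obtain ⟨n, hn⟩ := (AddCircle.coe_eq_zero_iff (1:ℝ)).1 h2
    simp only [zsmul_eq_mul, mul_one] at hn
    rcases Int.even_or_odd n with ⟨k, hk⟩ | ⟨k, hk⟩
    · left
      have : (r : ℝ) = (k : ℝ) := by rw [hk] at hn; push_cast at hn; linarith
      rw [this]; exact coe_int_zero k
    · right
      have : (r : ℝ) = (k : ℝ) + 1/2 := by rw [hk] at hn; push_cast at hn; linarith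
      rw [this, half, AddCircle.coe_add, coe_int_zero, zero_add]
  · rintro (rfl | rfl)
    · simp
    · rw [neg_eq_iff_add_eq_zero, half, ← AddCircle.coe_add]
      exact (AddCircle.coe_eq_zero_iff (1:ℝ)).2 ⟨1, by norm_num⟩

lemma l2 (x : Circ) : -x + half = x ↔ x = quarter ∨ x = threeQuarter := by
  have key : -x + half = x ↔ x + x = half := by
    constructor
    · intro h
      have := congrArg (fun y => x + y) h
      simpa using this.symm
    · intro h
      have : -x + (x + x) = -x + half := by rw [h]
      simpa using this.symm
  rw [key]
  constructor
  · intro h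
    induction x using QuotientAddGroup.induction_on with | H r =>
    have h2 : ((r + r - 1/2 : ℝ) : Circ) = 0 := by
      rw [AddCircle.coe_sub, sub_eq_zero, AddCircle.coe_add]
      exact_mod_cast h
    obtain ⟨n, hn⟩ := (AddCircle.coe_eq_zero_iff (1:ℝ)).1 h2
    simp only [zsmul_eq_mul, mul_one] at hn
    rcases Int.even_or_odd n with ⟨k, hk⟩ | ⟨k, hk⟩
    · left
      have : (r : ℝ) = (k : ℝ) + 1/4 := by rw [hk] at hn; push_cast at hn; linarith
      rw [this, quarter, AddCircle.coe_add, coe_int_zero, zero_add]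
    · right
      have : (r : ℝ) = (k : ℝ) + 3/4 := by rw [hk] at hn; push_cast at hn; linarith
      rw [this, threeQuarter, AddCircle.coe_add, coe_int_zero, zero_add]
  · rintro (rfl | rfl)
    · rw [quarter, half, ← AddCircle.coe_add]; norm_num
    · rw [threeQuarter, half, ← AddCircle.coe_add,
        show (3/4 + 3/4 : ℝ) = 1/2 + 1 by norm_num]
      exact AddCircle.coe_add_period 1 (1/2)

lemma zero_ne_half : (0 : Circ) ≠ half := by
  intro h
  have h' : ((1/2 : ℝ) : Circ) = 0 := h.symm
  obtain ⟨n, hn⟩ := (AddCircle.coe_eq_zero_iff (1:ℝ)).1 h'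
  simp only [zsmul_eq_mul, mul_one] at hn
  have : (2 * n : ℤ) = (1 : ℤ) := by exact_mod_cast (by linarith : (2:ℝ) * n = 1)
  omega

lemma q_ne_tq : quarter ≠ threeQuarter := by
  intro h
  have h2 : ((3/4 - 1/4 : ℝ) : Circ) = 0 := by
    rw [AddCircle.coe_sub, sub_eq_zero]; exact (h : ((1/4:ℝ):Circ) = ((3/4:ℝ):Circ)).symm
  rw [show (3/4 - 1/4 : ℝ) = 1/2 by norm_num] at h2
  exact zero_ne_half h2.symm

/-- The fixed point set of `γ` on `𝕋⁷` is the union of the 16 disjoint 3-tori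
`{x : x₁,x₃ ∈ {0,1/2}, x₅,x₇ ∈ {1/4,3/4}}`, and the composite `βγ` acts on
`𝕋⁷` without fixed points. -/
theorem fix_gamma_and_betagamma_free :
    (∀ x : T7, tγ x = x ↔
      ((x 0 = 0 ∨ x 0 = half) ∧ (x 2 = 0 ∨ x 2 = half) ∧
       (x 4 = quarter ∨ x 4 = threeQuarter) ∧
       (x 6 = quarter ∨ x 6 = threeQuarter))) ∧
    ((0 : Circ) ≠ half ∧ quarter ≠ threeQuarter) ∧
    (∀ x : T7, tβ (tγ x) ≠ x) := by
  refine ⟨fun x => ⟨fun h => ?_, fun ⟨h0, h2, h4, h6⟩ => ?_⟩, ⟨zero_ne_half, q_ne_tq⟩,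
    fun x h => ?_⟩
  · exact ⟨(l1 (x 0)).1 (congrFun h 0), (l1 (x 2)).1 (congrFun h 2),
      (l2 (x 4)).1 (congrFun h 4), (l2 (x 6)).1 (congrFun h 6)⟩
  · funext i
    fin_cases i
    · exact (l1 (x 0)).2 h0
    · rfl
    · exact (l1 (x 2)).2 h2
    · rfl
    · exact (l2 (x 4)).2 h4
    · rfl
    · exact (l2 (x 6)).2 h6
  · have h6' : -(-x 6 + half) = x 6 := congrFun h 6
    rw [neg_add, neg_neg] at h6'
    have h7 : x 6 + -half = x 6 + 0 := h6'.trans (add_zero _).symm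
    exact zero_ne_half (neg_eq_zero.1 (add_left_cancel h7)).symm
end

section
/- The fixed point sets of the three involutions α, β, γ on 𝕋⁷ are pairwise disjoint: no point of 𝕋⁷ is fixed by two distinct elements among α, β, γ. -/
lemma half_ne_zero' : half ≠ 0 := by
  intro h
  rw [half, AddCircle.coe_eq_zero_iff] at h
  obtain ⟨n, hn⟩ := h
  have h1 : (n : ℝ) = 1/2 := by simpa using hn
  have h2 : ((2 * n : ℤ) : ℝ) = 1 := by push_cast; linarith
  have h3 : (2 * n : ℤ) = 1 := by exact_mod_cast h2
  omega

/-- The fixed point sets of `α, β, γ` on `𝕋⁷` are pairwise disjoint: no point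
is fixed by two distinct elements among `α, β, γ`. -/
theorem fixed_sets_pairwise_disjoint :
    (∀ x : T7, ¬(tα x = x ∧ tβ x = x)) ∧
    (∀ x : T7, ¬(tα x = x ∧ tγ x = x)) ∧
    (∀ x : T7, ¬(tβ x = x ∧ tγ x = x)) := by
  refine ⟨?_, ?_, ?_⟩
  · rintro x ⟨ha, hb⟩
    have h1 := congr_fun ha 5
    have h2 := congr_fun hb 5
    simp only [tα, tβ, Matrix.cons_val_fin_one, Matrix.cons_val_zero,
      Matrix.cons_val_one, Matrix.head_cons] at h1 h2
    exact half_ne_zero' (left_eq_add.mp (h1.trans h2.symm))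
  · rintro x ⟨ha, hg⟩
    have h1 := congr_fun ha 4
    have h2 := congr_fun hg 4
    simp only [tα, tγ, Matrix.cons_val_fin_one, Matrix.cons_val_zero,
      Matrix.cons_val_one, Matrix.head_cons] at h1 h2
    exact half_ne_zero' (left_eq_add.mp (h1.trans h2.symm))
  · rintro x ⟨hb, hg⟩
    have h1 := congr_fun hb 6
    have h2 := congr_fun hg 6
    simp only [tβ, tγ, Matrix.cons_val_fin_one, Matrix.cons_val_zero,
      Matrix.cons_val_one, Matrix.head_cons] at h1 h2
    exact half_ne_zero' (left_eq_add.mp (h1.trans h2.symm))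
end
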